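/- Two homogeneous polynomials A, B ∈ K[x,y,z] with no nonconstant common factor have only finitely many common zeros in the projective plane over the algebraic closure of K. -/

import Mathlib

open MvPolynomial

noncomputable section BezoutDefs

set_option maxHeartbeats 1000000
set_option synthInstance.maxHeartbeats 200000

/-- The field of fractions of `F[x,y,z]`. -/
abbrev FracF (F : Type) [Field F] := FractionRing (MvPolynomial (Fin 3) F)

/-- The canonical map `F[x,y,z] → F(x,y,z)`. -/
abbrev toFrac (F : Type) [Field F] : MvPolynomial (Fin 3) F →+* FracF F :=
  algebraMap (MvPolynomial (Fin 3) F) (FracF F)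

/-- The local ring of degree-0 rational functions at a point `p`:
quotients `S/T` of homogeneous polynomials of equal degree with `T(p) ≠ 0`. -/
def Rloc (F : Type) [Field F] (p : Fin 3 → F) :
    Subalgebra F (FracF F) where
  carrier := {q | ∃ (S T : MvPolynomial (Fin 3) F) (d : ℕ),
      S.IsHomogeneous d ∧ T.IsHomogeneous d ∧ eval p T ≠ 0 ∧
      q * toFrac F T = toFrac F S}
  mul_mem' := by
    rintro q1 q2 ⟨S1, T1, d1, hS1, hT1, hTp1, h1⟩ ⟨S2, T2, d2, hS2, hT2, hTp2, h2⟩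
    refine ⟨S1 * S2, T1 * T2, d1 + d2, hS1.mul hS2, hT1.mul hT2, by simp [hTp1, hTp2], ?_⟩
    rw [map_mul, map_mul]
    linear_combination (q2 * toFrac F T2) * h1 + (toFrac F S1) * h2
  one_mem' := ⟨1, 1, 0, isHomogeneous_one _ _, isHomogeneous_one _ _, by simp, by simp⟩
  add_mem' := by
    rintro q1 q2 ⟨S1, T1, d1, hS1, hT1, hTp1, h1⟩ ⟨S2, T2, d2, hS2, hT2, hTp2, h2⟩
    refine ⟨S1 * T2 + S2 * T1, T1 * T2, d1 + d2,
      (hS1.mul hT2).add (by simpa [Nat.add_comm] using hS2.mul hT1),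
      hT1.mul hT2, by simp [hTp1, hTp2], ?_⟩
    rw [map_add, map_mul, map_mul, map_mul]
    linear_combination (toFrac F T2) * h1 + (toFrac F T1) * h2
  zero_mem' := ⟨0, 1, 0, isHomogeneous_zero _ _ _, isHomogeneous_one _ _, by simp, by simp⟩
  algebraMap_mem' := by
    intro r
    refine ⟨C r, 1, 0, isHomogeneous_C _ _, isHomogeneous_one _ _, by simp, ?_⟩
    simp [IsScalarTower.algebraMap_apply F (MvPolynomial (Fin 3) F) (FracF F)]

/-- The ideal of `Rloc F p` generated by the curves `A` and `B`. -/
def interIdeal (F : Type) [Field F] (p : Fin 3 → F) (A B : MvPolynomial (Fin 3) F) :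
    Ideal (Rloc F p) :=
  Ideal.span {q : Rloc F p | ∃ (M N T : MvPolynomial (Fin 3) F) (d : ℕ),
    (M * A + N * B).IsHomogeneous d ∧ T.IsHomogeneous d ∧ eval p T ≠ 0 ∧
    q.1 * toFrac F T = toFrac F (M * A + N * B)}

/-- Intersection multiplicity of the curves `A` and `B` at the point `p`. -/
def interMult (F : Type) [Field F] (p : Fin 3 → F) (A B : MvPolynomial (Fin 3) F) : ℕ :=
  Module.finrank F ((Rloc F p) ⧸ (interIdeal F p A B))

end BezoutDefs

open MvPolynomial

section
open Polynomial in
theorem myClearDenoms {R : Type*} [CommRing R] [IsDomain R] [UniqueFactorizationMonoid R]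
    (a b : Polynomial R) (h : IsRelPrime a b) (ha : a ≠ 0) (hb : b ≠ 0) :
    ∃ c : R, c ≠ 0 ∧ ∃ M N : Polynomial R, Polynomial.C c = M * a + N * b := by
  classical
  letI : NormalizationMonoid R := UniqueFactorizationMonoid.normalizationMonoid.toNormalizationMonoid
  letI : NormalizedGCDMonoid R := UniqueFactorizationMonoid.toNormalizedGCDMonoid R
  set L := FractionRing R
  set f : R →+* L := algebraMap R L with hf
  have hfinj : Function.Injective f := IsFractionRing.injective R L
  have hmapinj : Function.Injective (Polynomial.map f) := Polynomial.map_injective f hfinj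
  have ha' : a.map f ≠ 0 := fun h0 => ha (hmapinj (by simpa using h0))
  have hb' : b.map f ≠ 0 := fun h0 => hb (hmapinj (by simpa using h0))
  have hC : ∀ (r : R), r ≠ 0 → IsUnit (Polynomial.C (f r)) := by
    intro r hr
    exact isUnit_C.mpr (isUnit_iff_ne_zero.mpr fun h0 => hr (hfinj (by simpa using h0)))
  have hsmulC : ∀ (r : R) (p : Polynomial L), (r : R) • p = Polynomial.C (f r) * p := by
    intro r p
    ext n
    simp [Polynomial.coeff_smul, Algebra.smul_def, hf]
  -- relative primality over the fraction field
  have hrel : IsRelPrime (a.map f) (b.map f) := by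
    intro d hda hdb
    by_contra hd
    have hdne : d ≠ 0 := by
      rintro rfl
      exact ha' (zero_dvd_iff.mp hda)
    obtain ⟨⟨s, hs⟩, hsmap⟩ :=
      IsLocalization.integerNormalization_map_to_map (nonZeroDivisors R) d
    rw [hsmulC] at hsmap
    set e0 : Polynomial R := IsLocalization.integerNormalization (nonZeroDivisors R) d with he0def
    have hsne : s ≠ 0 := mem_nonZeroDivisors_iff_ne_zero.mp hs
    have he0 : e0 ≠ 0 := by
      intro h0
      rw [h0, Polynomial.map_zero] at hsmap
      rcases mul_eq_zero.mp hsmap.symm with h1 | h1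
      · exact hsne (hfinj (by simpa using (Polynomial.C_eq_zero.mp h1)))
      · exact hdne h1
    set e : Polynomial R := e0.primPart with hedef
    have hce : e0.content ≠ 0 := fun h0 => he0 (content_eq_zero_iff.mp h0)
    have hkey : Polynomial.C (f e0.content) * e.map f = Polynomial.C (f s) * d := by
      have h1 := congrArg (Polynomial.map f) (e0.eq_C_content_mul_primPart)
      rw [Polynomial.map_mul, Polynomial.map_C] at h1
      rw [← h1, hsmap]
    have hdvd : ∀ (p : Polynomial R), p ≠ 0 → d ∣ p.map f → e ∣ p := by
      intro p hp hdp
      have hpc : p.content ≠ 0 := fun h0 => hp (content_eq_zero_iff.mp h0)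
      have h2 : e.map f ∣ d := by
        refine (hC s hsne).dvd_mul_left.mp ?_
        rw [← hkey, mul_comm]
        exact Dvd.intro _ rfl
      have h3 : d ∣ p.primPart.map f := by
        have h4 := congrArg (Polynomial.map f) p.eq_C_content_mul_primPart
        rw [Polynomial.map_mul, Polynomial.map_C] at h4
        have h5 : d ∣ Polynomial.C (f p.content) * p.primPart.map f := by rw [← h4]; exact hdp
        exact ((hC p.content hpc).dvd_mul_left).mp h5
      have h1 : e.map f ∣ p.primPart.map f := h2.trans h3
      exact (e0.isPrimitive_primPart.dvd_of_fraction_map_dvd_fraction_map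
        h1).trans p.primPart_dvd
    have hue : IsUnit e := h (hdvd a ha hda) (hdvd b hb hdb)
    refine hd (isUnit_of_mul_isUnit_right (y := d) (x := Polynomial.C (f s)) ?_)
    rw [← hkey]
    exact (hC e0.content hce).mul (hue.map (Polynomial.mapRingHom f))
  -- Bezout over the fraction field
  have hcop : IsCoprime (a.map f) (b.map f) := hrel.isCoprime
  obtain ⟨u, v, huv⟩ := hcop
  obtain ⟨⟨s, hs⟩, hsmap⟩ :=
    IsLocalization.integerNormalization_map_to_map (nonZeroDivisors R) u
  obtain ⟨⟨t, ht⟩, htmap⟩ :=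
    IsLocalization.integerNormalization_map_to_map (nonZeroDivisors R) v
  rw [hsmulC] at hsmap htmap
  set U : Polynomial R := IsLocalization.integerNormalization (nonZeroDivisors R) u
  set V : Polynomial R := IsLocalization.integerNormalization (nonZeroDivisors R) v
  refine ⟨s * t, mul_ne_zero (mem_nonZeroDivisors_iff_ne_zero.mp hs)
    (mem_nonZeroDivisors_iff_ne_zero.mp ht), Polynomial.C t * U, Polynomial.C s * V, ?_⟩
  apply hmapinj
  rw [Polynomial.map_add, Polynomial.map_mul, Polynomial.map_mul, Polynomial.map_mul,
    Polynomial.map_mul, Polynomial.map_C, Polynomial.map_C, Polynomial.map_C, hsmap, htmap,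
    map_mul, Polynomial.C_mul]
  linear_combination (-(Polynomial.C (f s) * Polynomial.C (f t))) * huv
end

section
open MvPolynomial

theorem myFinSuccEquiv_rename_succ {K : Type} [CommSemiring K] {n : ℕ}
    (c : MvPolynomial (Fin n) K) :
    finSuccEquiv K n (rename Fin.succ c) = Polynomial.C c := by
  induction c using MvPolynomial.induction_on with
  | C r => simp [finSuccEquiv_apply, MvPolynomial.eval₂Hom_C]
  | add p q hp hq => rw [map_add, map_add, hp, hq, map_add]
  | mul_X p i hp => rw [map_mul, map_mul, hp, rename_X, finSuccEquiv_X_succ, map_mul]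

theorem myElim {K : Type} [Field K] (A B : MvPolynomial (Fin 3) K)
    (h : IsRelPrime A B) (hA : ¬IsUnit A) (hB : ¬IsUnit B) :
    ∃ c : MvPolynomial (Fin 2) K, c ≠ 0 ∧
      ∃ M N : MvPolynomial (Fin 3) K, rename Fin.succ c = M * A + N * B := by
  have hA0 : A ≠ 0 := by rintro rfl; exact hB (isRelPrime_zero_left.mp h)
  have hB0 : B ≠ 0 := by rintro rfl; exact hA (isRelPrime_zero_right.mp h)
  set φ := finSuccEquiv K 2 with hφ
  have hdesc : ∀ x : MvPolynomial (Fin 3) K, ∀ d, d ∣ φ x → φ.symm d ∣ x := by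
    intro x d ⟨e, he⟩
    exact ⟨φ.symm e, by
      have := congrArg φ.symm he
      rwa [AlgEquiv.symm_apply_apply, map_mul] at this⟩
  have hrel : IsRelPrime (φ A) (φ B) := by
    intro d hd1 hd2
    have hu : IsUnit (φ.symm d) := h (hdesc A d hd1) (hdesc B d hd2)
    have := hu.map φ
    rwa [AlgEquiv.apply_symm_apply] at this
  have hφA : φ A ≠ 0 := fun h0 => hA0 (by simpa using congrArg φ.symm h0)
  have hφB : φ B ≠ 0 := fun h0 => hB0 (by simpa using congrArg φ.symm h0)
  obtain ⟨c, hc, M', N', hMN⟩ := myClearDenoms (φ A) (φ B) hrel hφA hφB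
  refine ⟨c, hc, φ.symm M', φ.symm N', ?_⟩
  apply φ.injective
  rw [myFinSuccEquiv_rename_succ, map_add, map_mul, map_mul, AlgEquiv.apply_symm_apply,
    AlgEquiv.apply_symm_apply, hMN]
end

section
open MvPolynomial Finset

variable {K : Type} [CommRing K] {σ : Type*}

theorem myCompMul (M A : MvPolynomial σ K) {m : ℕ} (hA : A.IsHomogeneous m) (d : ℕ) :
    ∃ M', homogeneousComponent d (M * A) = M' * A := by
  have expand : M * A = ∑ i ∈ range (M.totalDegree + 1), homogeneousComponent i M * A := by
    rw [← Finset.sum_mul, sum_homogeneousComponent]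
  rw [expand, map_sum]
  have h1 : ∀ i ∈ range (M.totalDegree + 1),
      homogeneousComponent d (homogeneousComponent i M * A) =
        if d - m = i ∧ m ≤ d then homogeneousComponent i M * A else 0 := by
    intro i _
    rw [homogeneousComponent_of_mem ((mem_homogeneousSubmodule _ _).mpr
      (((homogeneousComponent_isHomogeneous i M).mul hA)))]
    congr 1
    simp only [eq_iff_iff]
    omega
  rw [Finset.sum_congr rfl h1]
  by_cases hm : m ≤ d
  · simp only [hm, and_true]
    rw [Finset.sum_ite_eq]
    split_ifs with h2
    · exact ⟨_, rfl⟩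
    · exact ⟨0, (zero_mul A).symm⟩
  · simp only [hm, and_false, if_false, Finset.sum_const_zero]
    exact ⟨0, (zero_mul A).symm⟩

theorem myCompSpan {A B r : MvPolynomial σ K} {m n : ℕ}
    (hA : A.IsHomogeneous m) (hB : B.IsHomogeneous n) {M N : MvPolynomial σ K}
    (h : r = M * A + N * B) (d : ℕ) :
    ∃ M' N', homogeneousComponent d r = M' * A + N' * B := by
  obtain ⟨M', hM'⟩ := myCompMul M A hA d
  obtain ⟨N', hN'⟩ := myCompMul N B hB d
  exact ⟨M', N', by rw [h, map_add, hM', hN']⟩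

theorem myCompRename {τ : Type*} (g : σ → τ) (c : MvPolynomial σ K) (d : ℕ) :
    homogeneousComponent d (rename g c) = rename g (homogeneousComponent d c) := by
  have expand : rename g c = ∑ i ∈ range (c.totalDegree + 1),
      rename g (homogeneousComponent i c) := by
    rw [← map_sum, sum_homogeneousComponent]
  rw [expand, map_sum]
  have h1 : ∀ i ∈ range (c.totalDegree + 1),
      homogeneousComponent d (rename g (homogeneousComponent i c)) =
        if d = i then rename g (homogeneousComponent i c) else 0 := by
    intro i _
    rw [homogeneousComponent_of_mem ((mem_homogeneousSubmodule _ _).mpr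
      ((homogeneousComponent_isHomogeneous i c).rename_isHomogeneous))]
  rw [Finset.sum_congr rfl h1, Finset.sum_ite_eq]
  split_ifs with h2
  · rfl
  · rw [Finset.mem_range, not_lt] at h2
    rw [homogeneousComponent_eq_zero _ _ (by omega), map_zero]
end

section
open MvPolynomial

theorem myElimHom {K : Type} [Field K] (A B : MvPolynomial (Fin 3) K) {m n : ℕ}
    (h : IsRelPrime A B) (hA : ¬IsUnit A) (hB : ¬IsUnit B)
    (hAh : A.IsHomogeneous m) (hBh : B.IsHomogeneous n) (σ : Equiv.Perm (Fin 3)) :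
    ∃ (c : MvPolynomial (Fin 2) K) (d : ℕ), c ≠ 0 ∧ c.IsHomogeneous d ∧
      ∃ M N : MvPolynomial (Fin 3) K, rename (σ ∘ Fin.succ) c = M * A + N * B := by
  classical
  set ψ := renameEquiv K σ.symm with hψ
  have hdesc : ∀ x : MvPolynomial (Fin 3) K, ∀ dd, dd ∣ ψ x → ψ.symm dd ∣ x := by
    intro x dd ⟨e, he⟩
    exact ⟨ψ.symm e, by
      have := congrArg ψ.symm he
      rwa [AlgEquiv.symm_apply_apply, map_mul] at this⟩
  have hrel : IsRelPrime (ψ A) (ψ B) := by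
    intro dd hd1 hd2
    have hu : IsUnit (ψ.symm dd) := h (hdesc A dd hd1) (hdesc B dd hd2)
    have := hu.map ψ
    rwa [AlgEquiv.apply_symm_apply] at this
  have hA' : ¬IsUnit (ψ A) := fun hu => hA (by simpa using hu.map ψ.symm)
  have hB' : ¬IsUnit (ψ B) := fun hu => hB (by simpa using hu.map ψ.symm)
  obtain ⟨c0, hc0, M0, N0, hMN0⟩ := myElim (ψ A) (ψ B) hrel hA' hB'
  -- push back through σ
  have hback : rename (σ ∘ Fin.succ) c0 = rename σ M0 * A + rename σ N0 * B := by
    have := congrArg (rename (σ : Fin 3 → Fin 3)) hMN0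
    rw [map_add, map_mul, map_mul, rename_rename] at this
    simp only [hψ, renameEquiv_apply, rename_rename, Equiv.self_comp_symm, rename_id] at this
    exact this
  -- extract a nonzero homogeneous component
  have hex : ∃ d, homogeneousComponent d c0 ≠ 0 := by
    by_contra hall
    push_neg at hall
    apply hc0
    rw [← sum_homogeneousComponent c0]
    exact Finset.sum_eq_zero fun i _ => hall i
  obtain ⟨d, hd⟩ := hex
  obtain ⟨M', N', hMN'⟩ := myCompSpan hAh hBh hback d
  refine ⟨homogeneousComponent d c0, d, hd, homogeneousComponent_isHomogeneous d c0,
    M', N', ?_⟩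
  rw [← myCompRename, hMN']
end

section
open MvPolynomial Finset

theorem myBinary {F : Type} [Field F] (r : MvPolynomial (Fin 2) F) {d : ℕ}
    (hr : r ≠ 0) (hh : r.IsHomogeneous d) :
    ∃ Λ : Finset (F × F), ∀ v : Fin 2 → F, v ≠ 0 → eval v r = 0 →
      ∃ p ∈ Λ, ∃ e : F, v 0 = e * p.1 ∧ v 1 = e * p.2 := by
  classical
  -- structure of the support
  have hsupp : ∀ u ∈ r.support, u = Finsupp.single 0 (u 0) + Finsupp.single 1 (u 1) ∧
      u 0 + u 1 = d := by
    intro u hu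
    constructor
    · ext i
      fin_cases i <;> simp [Finsupp.single_apply]
    · have := hh (MvPolynomial.mem_support_iff.mp hu)
      simpa [Finsupp.weight_apply, Finsupp.sum_fintype, Fin.sum_univ_two] using this
  set a : ℕ → F := fun i => coeff (Finsupp.single 0 i + Finsupp.single 1 (d - i)) r with ha
  set q : Polynomial F := ∑ i ∈ range (d + 1), Polynomial.C (a i) * Polynomial.X ^ i with hq
  have hqcoeff : ∀ i, i ∈ range (d + 1) → q.coeff i = a i := by
    intro i hi
    rw [hq, Polynomial.finset_sum_coeff]
    have : ∀ j ∈ range (d + 1),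
        (Polynomial.C (a j) * Polynomial.X ^ j).coeff i = if j = i then a j else 0 := by
      intro j _
      rw [Polynomial.coeff_C_mul, Polynomial.coeff_X_pow]
      simp [eq_comm]
    rw [Finset.sum_congr rfl this, Finset.sum_ite_eq', if_pos hi]
  have hqne : q ≠ 0 := by
    intro h0
    apply hr
    ext u
    rw [coeff_zero]
    by_contra hc
    obtain ⟨hu1, hu2⟩ := hsupp u (MvPolynomial.mem_support_iff.mpr hc)
    have hle : u 0 ∈ range (d + 1) := Finset.mem_range.mpr (by omega)
    have := hqcoeff (u 0) hle
    rw [h0, Polynomial.coeff_zero] at this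
    apply hc
    have h6 : a (u 0) = 0 := this.symm
    rw [ha] at h6
    simp only at h6
    rw [show d - u 0 = u 1 by omega] at h6
    rw [hu1]
    exact h6
  -- evaluation formula
  have heval : ∀ v : Fin 2 → F, v 1 ≠ 0 →
      eval v r = v 1 ^ d * q.eval (v 0 / v 1) := by
    intro v hv1
    have step1 : eval v r = ∑ i ∈ range (d + 1), a i * (v 0 ^ i * v 1 ^ (d - i)) := by
      rw [eval_eq']
      have hsub : r.support ⊆ (range (d + 1)).image
          (fun i => Finsupp.single 0 i + Finsupp.single 1 (d - i)) := by
        intro u hu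
        obtain ⟨hu1, hu2⟩ := hsupp u hu
        exact Finset.mem_image.mpr ⟨u 0, Finset.mem_range.mpr (by omega),
          by rw [show d - u 0 = u 1 by omega]; exact hu1.symm⟩
      rw [Finset.sum_subset hsub (fun u _ hu => by
        rw [MvPolynomial.notMem_support_iff.mp hu, zero_mul])]
      rw [Finset.sum_image (fun i _ j _ hij => by
        have := congrArg (fun (w : Fin 2 →₀ ℕ) => w 0) hij
        simpa [Finsupp.single_apply] using this)]
      refine Finset.sum_congr rfl fun i hi => ?_
      rw [Fin.prod_univ_two]
      simp [ha, Finsupp.single_apply]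
    rw [step1, hq, Polynomial.eval_finset_sum, Finset.mul_sum]
    refine Finset.sum_congr rfl fun i hi => ?_
    rw [Polynomial.eval_mul, Polynomial.eval_C, Polynomial.eval_pow, Polynomial.eval_X]
    have hid : i + (d - i) = d := by
      rw [Finset.mem_range] at hi; omega
    have hpow : v 1 ^ d = v 1 ^ i * v 1 ^ (d - i) := by rw [← pow_add, hid]
    rw [div_pow, hpow]
    field_simp
  refine ⟨insert (1, 0) ((q.roots.toFinset).image fun t => (t, 1)), ?_⟩
  intro v hv hev
  by_cases h1 : v 1 = 0
  · refine ⟨(1, 0), Finset.mem_insert_self _ _, v 0, by simp, by simp [h1]⟩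
  · set t : F := v 0 / v 1 with ht
    have hqt : q.eval t = 0 := by
      have := heval v h1
      rw [hev] at this
      have h2 : v 1 ^ d ≠ 0 := pow_ne_zero _ h1
      exact (mul_eq_zero.mp this.symm).resolve_left h2
    refine ⟨(t, 1), Finset.mem_insert_of_mem (Finset.mem_image.mpr
      ⟨t, Multiset.mem_toFinset.mpr (Polynomial.mem_roots'.mpr ⟨hqne, hqt⟩), rfl⟩), v 1, ?_, by simp⟩
    rw [ht]
    field_simp
end

/-- Two homogeneous polynomials with no nonconstant common factor have only finitely many
common zeros in the projective plane over the algebraic closure. -/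
theorem stmt14 {K : Type} [Field K] (A B : MvPolynomial (Fin 3) K) (m n : ℕ)
    (hA : A.IsHomogeneous m) (hB : B.IsHomogeneous n) (hcop : IsRelPrime A B) :
    {P : Projectivization (AlgebraicClosure K) (Fin 3 → AlgebraicClosure K) |
      eval P.rep (MvPolynomial.map (algebraMap K (AlgebraicClosure K)) A) = 0 ∧
      eval P.rep (MvPolynomial.map (algebraMap K (AlgebraicClosure K)) B) = 0}.Finite := by
  classical
  set F := AlgebraicClosure K
  set φ : K →+* F := algebraMap K F with hφ
  -- trivial case: one of them is a unit
  by_cases hUA : IsUnit A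
  · convert Set.finite_empty
    rw [Set.eq_empty_iff_forall_notMem]
    rintro P ⟨h1, h2⟩
    obtain ⟨A', hA'⟩ : ∃ A', A * A' = 1 := by
      obtain ⟨u, hu⟩ := hUA
      exact ⟨u.inv, by rw [← hu]; exact u.val_inv⟩
    have := congrArg (fun p => eval P.rep (MvPolynomial.map φ p)) hA'
    simp only [map_mul, map_one] at this
    rw [h1, zero_mul] at this
    exact zero_ne_one this
  by_cases hUB : IsUnit B
  · convert Set.finite_empty
    rw [Set.eq_empty_iff_forall_notMem]
    rintro P ⟨h1, h2⟩
    obtain ⟨B', hB'⟩ : ∃ B', B * B' = 1 := by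
      obtain ⟨u, hu⟩ := hUB
      exact ⟨u.inv, by rw [← hu]; exact u.val_inv⟩
    have := congrArg (fun p => eval P.rep (MvPolynomial.map φ p)) hB'
    simp only [map_mul, map_one] at this
    rw [h2, zero_mul] at this
    exact zero_ne_one this
  -- the three projections
  have hφinj : Function.Injective φ := φ.injective
  have main : ∀ σ : Equiv.Perm (Fin 3), ∃ (r : MvPolynomial (Fin 2) F) (d : ℕ),
      r ≠ 0 ∧ r.IsHomogeneous d ∧
      ∀ P : Projectivization F (Fin 3 → F),
        eval P.rep (MvPolynomial.map φ A) = 0 → eval P.rep (MvPolynomial.map φ B) = 0 →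
        eval (P.rep ∘ (σ ∘ Fin.succ)) r = 0 := by
    intro σ
    obtain ⟨c, d, hc0, hch, M, N, hMN⟩ := myElimHom A B hcop hUA hUB hA hB σ
    refine ⟨MvPolynomial.map φ c, d, ?_, hch.map φ, ?_⟩
    · intro h0
      exact hc0 (MvPolynomial.map_injective φ hφinj (by rw [h0, map_zero]))
    · intro P h1 h2
      have := congrArg (fun p => eval P.rep (MvPolynomial.map φ p)) hMN
      simp only [map_add, map_mul] at this
      rw [h1, h2, mul_zero, mul_zero, add_zero] at this
      rw [MvPolynomial.map_rename, eval_rename] at this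
      exact this
  obtain ⟨ra, da, hra0, hrah, hraP⟩ := main 1
  obtain ⟨rb, db, hrb0, hrbh, hrbP⟩ := main (Equiv.swap 0 1)
  obtain ⟨rc, dc, hrc0, hrch, hrcP⟩ := main (Equiv.swap 0 2)
  obtain ⟨Λa, hΛa⟩ := myBinary ra hra0 hrah
  obtain ⟨Λb, hΛb⟩ := myBinary rb hrb0 hrbh
  obtain ⟨Λc, hΛc⟩ := myBinary rc hrc0 hrch
  -- the finite set of candidate vectors
  set V : Set (Fin 3 → F) :=
    ((fun p : F × F => ![(0 : F), p.1, p.2]) '' (Λa : Set (F × F))) ∪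
    ((fun p : (F × F) × (F × F) => ![(1 : F), p.2.1 / p.2.2, p.1.2 / p.1.1]) ''
      ((Λb ×ˢ Λc : Finset ((F × F) × (F × F))) : Set ((F × F) × (F × F)))) with hV
  have hVfin : V.Finite := by
    apply Set.Finite.union
    · exact (Λa.finite_toSet).image _
    · exact ((Λb ×ˢ Λc).finite_toSet).image _
  refine Set.Finite.subset ((hVfin.preimage (Set.injOn_of_injective Subtype.val_injective)).image
    (Projectivization.mk' F)) ?_
  rintro P ⟨h1, h2⟩
  set v : Fin 3 → F := P.rep with hv
  have hvne : v ≠ 0 := P.rep_nonzero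
  -- show P is mk of some vector in V
  suffices hsuf : ∃ (w : Fin 3 → F) (hw : w ≠ 0), w ∈ V ∧ P = Projectivization.mk F w hw by
    obtain ⟨w, hw, hwV, hPw⟩ := hsuf
    exact ⟨⟨w, hw⟩, hwV, hPw.symm⟩
  by_cases h0 : v 0 = 0
  · -- use Λa
    have hva : (v ∘ ((1 : Equiv.Perm (Fin 3)) ∘ Fin.succ)) ≠ 0 := by
      intro hz
      apply hvne
      funext i
      fin_cases i
      · exact h0
      · simpa using congrFun hz 0
      · simpa using congrFun hz 1
    obtain ⟨p, hp, e, he1, he2⟩ := hΛa _ hva (hraP P h1 h2)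
    have he1' : v 1 = e * p.1 := by
      simpa [show ((1 : Equiv.Perm (Fin 3)) ∘ Fin.succ) 0 = 1 from by decide] using he1
    have he2' : v 2 = e * p.2 := by
      simpa [show ((1 : Equiv.Perm (Fin 3)) ∘ Fin.succ) 1 = 2 from by decide] using he2
    have hvw : v = e • ![(0 : F), p.1, p.2] := by
      funext i
      fin_cases i
      · simpa using h0
      · simpa using he1'
      · simpa using he2'
    have hwne : ![(0 : F), p.1, p.2] ≠ 0 := by
      intro hz
      rw [hz, smul_zero] at hvw
      exact hvne hvw
    refine ⟨_, hwne, Or.inl ⟨p, hp, rfl⟩, ?_⟩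
    conv_lhs => rw [← Projectivization.mk_rep P]
    exact (Projectivization.mk_eq_mk_iff' F _ _ hvne hwne).mpr ⟨e, hvw.symm⟩
  · -- use Λb and Λc
    have hvb : (v ∘ ((Equiv.swap 0 1 : Equiv.Perm (Fin 3)) ∘ Fin.succ)) ≠ 0 := by
      intro hz
      apply h0
      simpa [show ((Equiv.swap 0 1 : Equiv.Perm (Fin 3)) ∘ Fin.succ) 0 = 0 from by decide]
        using congrFun hz 0
    have hvc : (v ∘ ((Equiv.swap 0 2 : Equiv.Perm (Fin 3)) ∘ Fin.succ)) ≠ 0 := by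
      intro hz
      apply h0
      simpa [show ((Equiv.swap 0 2 : Equiv.Perm (Fin 3)) ∘ Fin.succ) 1 = 0 from by decide]
        using congrFun hz 1
    obtain ⟨pb, hpb, e, hb1, hb2⟩ := hΛb _ hvb (hrbP P h1 h2)
    obtain ⟨pc, hpc, f, hc1, hc2⟩ := hΛc _ hvc (hrcP P h1 h2)
    have hb1' : v 0 = e * pb.1 := by
      simpa [show ((Equiv.swap 0 1 : Equiv.Perm (Fin 3)) ∘ Fin.succ) 0 = 0 from by decide]
        using hb1
    have hb2' : v 2 = e * pb.2 := by
      simpa [show ((Equiv.swap 0 1 : Equiv.Perm (Fin 3)) ∘ Fin.succ) 1 = 2 from by decide,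
        show (Equiv.swap 0 1 : Equiv.Perm (Fin 3)) 2 = 2 from by decide]
        using hb2
    have hc1' : v 1 = f * pc.1 := by
      simpa [show ((Equiv.swap 0 2 : Equiv.Perm (Fin 3)) ∘ Fin.succ) 0 = 1 from by decide,
        show (Equiv.swap 0 2 : Equiv.Perm (Fin 3)) 1 = 1 from by decide]
        using hc1
    have hc2' : v 0 = f * pc.2 := by
      simpa [show ((Equiv.swap 0 2 : Equiv.Perm (Fin 3)) ∘ Fin.succ) 1 = 0 from by decide]
        using hc2
    have hene : e ≠ 0 := fun hz => h0 (by rw [hb1', hz, zero_mul])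
    have hfne : f ≠ 0 := fun hz => h0 (by rw [hc2', hz, zero_mul])
    have hpb1 : pb.1 ≠ 0 := fun hz => h0 (by rw [hb1', hz, mul_zero])
    have hpc2 : pc.2 ≠ 0 := fun hz => h0 (by rw [hc2', hz, mul_zero])
    set w : Fin 3 → F := ![(1 : F), pc.1 / pc.2, pb.2 / pb.1] with hw
    have hvw : v = (v 0) • w := by
      funext i
      fin_cases i
      · simp [hw]
      · have : v 0 * (pc.1 / pc.2) = f * pc.1 := by
          rw [hc2']
          rw [mul_assoc, mul_comm pc.2, div_mul_cancel₀ _ hpc2]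
        simpa [hw, this] using hc1'
      · have : v 0 * (pb.2 / pb.1) = e * pb.2 := by
          rw [hb1']
          rw [mul_assoc, mul_comm pb.1, div_mul_cancel₀ _ hpb1]
        simpa [hw, this] using hb2'
    have hwne : w ≠ 0 := by
      intro hz
      rw [hz, smul_zero] at hvw
      exact hvne hvw
    refine ⟨w, hwne, Or.inr ⟨(pb, pc), ?_, rfl⟩, ?_⟩
    · exact Finset.mem_coe.mpr (Finset.mem_product.mpr ⟨hpb, hpc⟩)
    · conv_lhs => rw [← Projectivization.mk_rep P]
      exact (Projectivization.mk_eq_mk_iff' F _ _ hvne hwne).mpr ⟨v 0, hvw.symm⟩
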